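/- Let 𝒢 be a transitive subgroup of S₅. Then G, viewed as an 𝔽₂[𝒢]-module, is simple (it is nonzero and its only 𝔽₂[𝒢]-submodules are 0 and G) and faithful (the only element of 𝒢 acting as the identity on G is the identity). -/

import Mathlib

/-- The zero-sum submodule `G ⊆ (𝔽₂)⁵`. -/
def Gsub : Submodule (ZMod 2) (Fin 5 → ZMod 2) where
  carrier := {v | ∑ i, v i = 0}
  add_mem' := by
    intro a b ha hb
    simp only [Set.mem_setOf_eq] at *
    simp [Finset.sum_add_distrib, ha, hb]
  zero_mem' := by simp
  smul_mem' := by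
    intro c a ha
    simp only [Set.mem_setOf_eq] at *
    simp [← Finset.mul_sum, ha]

private def E (i : Fin 5) : Fin 5 → ZMod 2 := fun x => if x = i then 1 else 0

private lemma classifyE : ∀ v : Fin 5 → ZMod 2, (∑ i, v i = 0) → v ≠ 0 →
    (∃ i j, i ≠ j ∧ v = E i + E j) ∨ (∃ m, v = (fun _ => 1) + E m) := by decide

private lemma Emove (π : Equiv.Perm (Fin 5)) (i : Fin 5) :
    (fun j => E i (π⁻¹ j)) = E (π i) := by
  funext x
  simp only [E]
  by_cases h : x = π i
  · subst h; simp
  · rw [if_neg h, if_neg]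
    intro hc
    exact h (by rw [← hc]; simp)


private lemma two_others : ∀ i : Fin 5, ∃ k1 k2 : Fin 5, k1 ≠ i ∧ k2 ≠ i ∧ k1 ≠ k2 := by
  decide

section main

variable (𝒢 : Subgroup (Equiv.Perm (Fin 5)))
    (htrans : ∀ i j : Fin 5, ∃ π ∈ 𝒢, π i = j)
    (p : Submodule (ZMod 2) (Fin 5 → ZMod 2))
    (hstab : ∀ π ∈ 𝒢, ∀ v ∈ p, (fun j => v (π⁻¹ j)) ∈ p)
include htrans hstab

-- invariance of the relation
private lemma rel_inv (π : Equiv.Perm (Fin 5)) (hπ : π ∈ 𝒢) (a b : Fin 5)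
    (h : a = b ∨ E a + E b ∈ p) : π a = π b ∨ E (π a) + E (π b) ∈ p := by
  rcases h with h | h
  · exact Or.inl (by rw [h])
  · right
    have := hstab π hπ _ h
    have he : (fun j => (E a + E b) (π⁻¹ j)) = E (π a) + E (π b) := by
      funext x
      simp only [Pi.add_apply]
      rw [show E a (π⁻¹ x) = E (π a) x from congrFun (Emove π a) x,
          show E b (π⁻¹ x) = E (π b) x from congrFun (Emove π b) x]
    rwa [he] at this

-- existence of a pair vector in p
private lemma pair_exists (v : Fin 5 → ZMod 2) (hv : v ∈ p) (hv0 : v ≠ 0)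
    (hvs : ∑ i, v i = 0) : ∃ i j, i ≠ j ∧ E i + E j ∈ p := by
  rcases classifyE v hvs hv0 with ⟨i, j, hij, he⟩ | ⟨m, he⟩
  · exact ⟨i, j, hij, he ▸ hv⟩
  · -- v = 1 + E m
    obtain ⟨m', hm'⟩ : ∃ m' : Fin 5, m' ≠ m := by
      refine ⟨if m = 0 then 1 else 0, ?_⟩
      split <;> simp_all [eq_comm]
    obtain ⟨π, hπ, hπm⟩ := htrans m m'
    have hw : (fun j => v (π⁻¹ j)) ∈ p := hstab π hπ v hv
    have hsum : v + (fun j => v (π⁻¹ j)) ∈ p := p.add_mem hv hw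
    refine ⟨m, m', hm'.symm, ?_⟩
    have he2 : v + (fun j => v (π⁻¹ j)) = E m + E m' := by
      funext x
      simp only [Pi.add_apply, he]
      rw [show E m (π⁻¹ x) = E (π m) x from congrFun (Emove π m) x, hπm]
      have : ∀ a b : ZMod 2, (1 + a) + (1 + b) = a + b := by decide
      exact this _ _
    rwa [he2] at hsum
end main

section main2
variable (𝒢 : Subgroup (Equiv.Perm (Fin 5)))
    (htrans : ∀ i j : Fin 5, ∃ π ∈ 𝒢, π i = j)
    (p : Submodule (ZMod 2) (Fin 5 → ZMod 2))
    (hstab : ∀ π ∈ 𝒢, ∀ v ∈ p, (fun j => v (π⁻¹ j)) ∈ p)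
include htrans hstab

private lemma all_pairs (i0 j0 : Fin 5) (hij : i0 ≠ j0) (hp : E i0 + E j0 ∈ p) :
    ∀ a b : Fin 5, E a + E b ∈ p := by
  classical
  set r : Fin 5 → Fin 5 → Prop := fun a b => a = b ∨ E a + E b ∈ p with hr
  have hsymm : ∀ a b, r a b → r b a := by
    rintro a b (h | h)
    · exact Or.inl h.symm
    · right; rwa [add_comm] at h
  have htr : ∀ a b c, r a b → r b c → r a c := by
    rintro a b c (rfl | h1) h2
    · exact h2
    · rcases h2 with rfl | h2
      · exact Or.inr h1
      · right
        have := p.add_mem h1 h2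
        have he : (E a + E b) + (E b + E c) = E a + E c := by
          funext x
          have : ∀ u v w : ZMod 2, (u + v) + (v + w) = u + w := by decide
          exact this _ _ _
        rwa [he] at this
  have hinv : ∀ π ∈ 𝒢, ∀ a b, r a b → r (π a) (π b) := by
    intro π hπ a b h
    exact rel_inv 𝒢 htrans p hstab π hπ a b h
  set C : Fin 5 → Finset (Fin 5) := fun a => Finset.univ.filter (fun b => r a b) with hC
  have hmemC : ∀ a b, b ∈ C a ↔ r a b := by
    intro a b; simp [hC]
  have hcard_le : ∀ a b, (C a).card ≤ (C b).card := by
    intro a b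
    obtain ⟨π, hπ, hπab⟩ := htrans a b
    apply Finset.card_le_card_of_injOn π
    · intro x hx
      rw [Finset.mem_coe, hmemC] at hx
      rw [Finset.mem_coe, hmemC]
      rw [← hπab]
      exact hinv π hπ a x hx
    · exact fun x _ y _ h => π.injective h
  have hcard_eq : ∀ a b, (C a).card = (C b).card := fun a b =>
    le_antisymm (hcard_le a b) (hcard_le b a)
  have hdisj : ∀ a b, ¬ r a b → Disjoint (C a) (C b) := by
    intro a b hab
    rw [Finset.disjoint_left]
    intro x hxa hxb
    rw [hmemC] at hxa hxb
    exact hab (htr a x b hxa (hsymm b x hxb))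
  have hri : ∀ a, r i0 a := by
    by_contra hcon
    push_neg at hcon
    obtain ⟨a, ha⟩ := hcon
    have h2 : 2 ≤ (C i0).card := by
      rw [show (2:ℕ) = 1 + 1 from rfl, Nat.add_one_le_iff, Finset.one_lt_card]
      exact ⟨i0, (hmemC _ _).2 (Or.inl rfl), j0, (hmemC _ _).2 (Or.inr hp), hij⟩
    have hd : Disjoint (C i0) (C a) := hdisj _ _ ha
    have hunion : (C i0 ∪ C a).card = (C i0).card + (C a).card :=
      Finset.card_union_of_disjoint hd
    have hle5 : (C i0 ∪ C a).card ≤ 5 := by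
      have := Finset.card_le_card (Finset.subset_univ (C i0 ∪ C a))
      simpa using this
    have hcc : (C a).card = (C i0).card := hcard_eq a i0
    have hs2 : (C i0).card = 2 := by omega
    -- find c outside the union
    have hne : C i0 ∪ C a ≠ Finset.univ := by
      intro h
      rw [h] at hunion
      simp [Finset.card_univ, hcc, hs2] at hunion
    obtain ⟨c, hc⟩ : ∃ c, c ∉ C i0 ∪ C a := by
      by_contra hcon2
      push_neg at hcon2
      exact hne (Finset.eq_univ_iff_forall.mpr hcon2)
    rw [Finset.mem_union] at hc
    push_neg at hc
    have hdc1 : Disjoint (C c) (C i0) := (hdisj _ _ (fun h => hc.1 ((hmemC _ _).2 h))).symm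
    have hdc2 : Disjoint (C c) (C a) := (hdisj _ _ (fun h => hc.2 ((hmemC _ _).2 h))).symm
    have hsub : C c ⊆ Finset.univ \ (C i0 ∪ C a) := by
      intro x hx
      rw [Finset.mem_sdiff, Finset.mem_union]
      refine ⟨Finset.mem_univ _, ?_⟩
      rintro (h | h)
      · exact (Finset.disjoint_left.1 hdc1) hx h
      · exact (Finset.disjoint_left.1 hdc2) hx h
    have := Finset.card_le_card hsub
    rw [Finset.card_sdiff_of_subset (Finset.subset_univ _)] at this
    have hcc2 : (C c).card = (C i0).card := hcard_eq c i0
    simp [Finset.card_univ, hunion, hcc, hs2, hcc2] at this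
  intro a b
  have hab : r a b := htr a i0 b (hsymm i0 a (hri a)) (hri b)
  rcases hab with rfl | h
  · have : E a + E a = 0 := by
      funext x
      have : ∀ u : ZMod 2, u + u = 0 := by decide
      exact this _
    rw [this]; exact p.zero_mem
  · exact h
end main2

private lemma span_pairs (p : Submodule (ZMod 2) (Fin 5 → ZMod 2))
    (hall : ∀ a b : Fin 5, E a + E b ∈ p)
    (w : Fin 5 → ZMod 2) (hw : ∑ i, w i = 0) : w ∈ p := by
  have hrepr : w = ∑ i, w i • (E i + E (0 : Fin 5)) := by
    funext x
    simp only [Finset.sum_apply, Pi.smul_apply, Pi.add_apply, smul_eq_mul, mul_add, E]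
    rw [Finset.sum_add_distrib]
    have h1 : ∑ i, w i * (if x = i then 1 else 0) = w x := by
      simp [mul_ite, Finset.sum_ite_eq]
    have h2 : ∑ i : Fin 5, w i * (if x = (0:Fin 5) then 1 else 0) = 0 := by
      rw [← Finset.sum_mul, hw, zero_mul]
    rw [h1, h2, add_zero]
  rw [hrepr]
  exact p.sum_mem (fun i _ => p.smul_mem _ (hall i 0))

private lemma mem_Gsub (v : Fin 5 → ZMod 2) : v ∈ Gsub ↔ ∑ i, v i = 0 := Iff.rfl

/-- If `𝒢` is a transitive subgroup of `S₅`, then the zero-sum module `G` is a simple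
and faithful `𝔽₂[𝒢]`-module (the action being `(π • v) j = v (π⁻¹ j)`). -/
theorem stmt1 (𝒢 : Subgroup (Equiv.Perm (Fin 5)))
    (htrans : ∀ i j : Fin 5, ∃ π ∈ 𝒢, π i = j) :
    -- `G` is nonzero
    Gsub ≠ ⊥ ∧
    -- the only `𝒢`-stable `𝔽₂`-submodules contained in `G` are `0` and `G`
    (∀ p : Submodule (ZMod 2) (Fin 5 → ZMod 2), p ≤ Gsub →
      (∀ π ∈ 𝒢, ∀ v ∈ p, (fun j => v (π⁻¹ j)) ∈ p) → p = ⊥ ∨ p = Gsub) ∧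
    -- the action of `𝒢` on `G` is faithful
    (∀ π ∈ 𝒢, (∀ v ∈ Gsub, (fun j => v (π⁻¹ j)) = v) → π = 1) := by

  refine ⟨?_, ?_, ?_⟩
  · -- nonzero
    intro h
    have hm : E 0 + E 1 ∈ Gsub := by
      rw [mem_Gsub]; decide
    rw [h, Submodule.mem_bot] at hm
    have := congrFun hm 0
    simp [E] at this
  · -- simple
    intro p hpG hstab
    by_cases hbot : p = ⊥
    · exact Or.inl hbot
    right
    obtain ⟨v, hv, hv0⟩ : ∃ v, v ∈ p ∧ v ≠ 0 := by
      by_contra hcon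
      push_neg at hcon
      refine hbot ?_
      rw [Submodule.eq_bot_iff]
      intro x hx
      by_contra hx0
      exact hx0 (hcon x hx)
    have hvs : ∑ i, v i = 0 := (mem_Gsub v).1 (hpG hv)
    obtain ⟨i, j, hij, hp⟩ := pair_exists 𝒢 htrans p hstab v hv hv0 hvs
    have hall := all_pairs 𝒢 htrans p hstab i j hij hp
    apply le_antisymm hpG
    intro w hw
    exact span_pairs p hall w ((mem_Gsub w).1 hw)
  · -- faithful
    intro π _ h
    apply Equiv.ext
    intro i
    have key : ∀ k : Fin 5, k ≠ i → π i = i ∨ π i = k := by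
      intro k hk
      have hmem : E i + E k ∈ Gsub := by
        rw [mem_Gsub]
        simp only [Pi.add_apply]
        rw [Finset.sum_add_distrib]
        have : ∀ m : Fin 5, ∑ x, E m x = 1 := by decide
        rw [this, this]
        decide
      have := congrFun (h _ hmem) (π i)
      simp only [Pi.add_apply, Equiv.Perm.inv_def, Equiv.symm_apply_apply] at this
      have hvi : E i i + E k i = 1 := by
        simp [E, (Ne.symm hk)]
      rw [hvi] at this
      by_contra hcon
      push_neg at hcon
      rw [show E i (π i) = 0 by simp [E, hcon.1],
          show E k (π i) = 0 by simp [E, hcon.2]] at this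
      simp at this
    obtain ⟨k1, k2, hk1, hk2, hkk⟩ := two_others i
    rcases key k1 hk1 with h1 | h1
    · simp [h1]
    rcases key k2 hk2 with h2 | h2
    · simp [h2]
    exact absurd (h1 ▸ h2 ▸ rfl : k1 = k2).symm (Ne.symm hkk)
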